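/- Let f : ℝ^{n_z} × ℝ^{n_u} → ℝ^{n_z} be polynomial and let π : ℝ^{n_z} → ℝ^{n_u} be a feed-forward fully-connected neural network with continuous activation function φ, with f(0, π(0)) = 0 taking the equilibrium to be the origin. Let x : ℝ^{n_z} → ℝᴺ denote the concatenation of all hidden-layer states (x¹,…,x^ℓ) of the network evaluated at input z, and set X(z) = (x(z), z) ∈ ℝ^{N+n_z}. Suppose g₁,…,g_p and h₁,…,h_q are polynomial functions on ℝ^{N+n_z} abstracting the network, i.e. g_i(X(z)) ≥ 0 and h_j(X(z)) = 0 for all z ∈ ℝ^{n_z} and all i, j. Suppose there exist polynomial functions V : ℝ^{n_z} → ℝ with V(0) = 0, ρ : ℝ^{n_z} → ℝ with ρ(0) = 0 and ρ(z) > 0 for z ≠ 0, s₁,…,s_p and t₁,…,t_q on ℝ^{N+n_z}, such that: V − ρ is SOS; each s_i is SOS; and the polynomial function X = (x,z) ↦ −∇V(z)·f(z, W^ℓ x^ℓ + b^ℓ) − Σ_j t_j(X)h_j(X) − Σ_i s_i(X)g_i(X) is SOS, where W^ℓ x^ℓ + b^ℓ is the network output written in terms of the last hidden-layer block x^ℓ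 of x. Then the origin is a stable equilibrium of the closed loop ż = f(z, π(z)): for every ε > 0 there exists δ > 0 such that every differentiable z : [0,∞) → ℝ^{n_z} with z'(t) = f(z(t), π(z(t))) for all t ≥ 0 and ‖z(0)‖ < δ satisfies ‖z(t)‖ < ε for all t ≥ 0. -/

import Mathlib

/-- The state `xᵏ` of a feed-forward fully-connected neural network with activation `φ`,
layer dimensions `dims`, weights `W` and biases `b`: `x⁰ = z` and
`x^{k+1} = φ (Wᵏ xᵏ + bᵏ)` componentwise. -/
noncomputable def netState (φ : ℝ → ℝ) (dims : ℕ → ℕ)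
    (W : ∀ k : ℕ, Matrix (Fin (dims (k + 1))) (Fin (dims k)) ℝ)
    (b : ∀ k : ℕ, Fin (dims (k + 1)) → ℝ) :
    (k : ℕ) → (Fin (dims 0) → ℝ) → Fin (dims k) → ℝ
  | 0, z => z
  | k + 1, z => fun i => φ ((W k).mulVec (netState φ dims W b k z) i + b k i)

/-- Index type for the joint variable `X = (x, z)` consisting of all hidden-layer states
`x¹, …, x^{L+1}` (layers `ℓ = L + 1`) together with the network input `z`. -/
def NetIdx (dims : ℕ → ℕ) (L : ℕ) : Type :=
  (Σ k : Fin (L + 1), Fin (dims (k.1 + 1))) ⊕ Fin (dims 0)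

/-- The concatenation `X(z) = (x(z), z)` of all hidden-layer states with the input. -/
noncomputable def netX (φ : ℝ → ℝ) (dims : ℕ → ℕ)
    (W : ∀ k : ℕ, Matrix (Fin (dims (k + 1))) (Fin (dims k)) ℝ)
    (b : ∀ k : ℕ, Fin (dims (k + 1)) → ℝ) (L : ℕ)
    (z : Fin (dims 0) → ℝ) : NetIdx dims L → ℝ :=
  Sum.elim (fun s => netState φ dims W b (s.1.1 + 1) z s.2) z

/-- A function `(σ → ℝ) → ℝ` is a polynomial function. -/
def IsPolyFun {σ : Type*} (g : (σ → ℝ) → ℝ) : Prop :=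
  ∃ P : MvPolynomial σ ℝ, ∀ x, g x = MvPolynomial.eval x P

/-- A function `(σ → ℝ) → ℝ` is a sum of squares (SOS) of polynomial functions. -/
def IsSOSFun {σ : Type*} (g : (σ → ℝ) → ℝ) : Prop :=
  ∃ (m : ℕ) (r : Fin m → MvPolynomial σ ℝ),
    ∀ x, g x = ∑ i, (MvPolynomial.eval x (r i)) ^ 2


/-- Every SOS function is nonnegative. -/
lemma sosFun_nonneg {σ : Type*} (g : (σ → ℝ) → ℝ) (hg : IsSOSFun g) (x : σ → ℝ) :
    0 ≤ g x := by
  obtain ⟨m, r, hr⟩ := hg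
  rw [hr]
  exact Finset.sum_nonneg fun i _ => sq_nonneg _

/-- Multivariate polynomial evaluation is differentiable. -/
lemma mvpoly_diff {n : ℕ} (P : MvPolynomial (Fin n) ℝ) :
    Differentiable ℝ (fun x : Fin n → ℝ => MvPolynomial.eval x P) := by
  induction P using MvPolynomial.induction_on with
  | C a => simpa using differentiable_const a
  | add p q hp hq => simpa using hp.fun_add hq
  | mul_X p i hp =>
      simp only [MvPolynomial.eval_mul, MvPolynomial.eval_X]
      exact hp.mul (differentiable_pi.mp differentiable_id i)

/-- **SOS certificate for global stability of a neural feedback loop.**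
Given a polynomial plant `ż = f(z, u)` in feedback with an `(L+1)`-layer neural network
controller `π`, whose input–output behaviour is abstracted by polynomial constraints
`gᵢ(X(z)) ≥ 0`, `hⱼ(X(z)) = 0`, if there are polynomial `V` (with `V 0 = 0`), a positive
definite polynomial `ρ`, SOS multipliers `sᵢ` and polynomial multipliers `tⱼ` such that
`V − ρ` is SOS and `X ↦ −∇V(z)·f(z, W^ℓ x^ℓ + b^ℓ) − Σⱼ tⱼ(X) hⱼ(X) − Σᵢ sᵢ(X) gᵢ(X)`
is SOS, then the origin is a stable equilibrium of the closed loop. -/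
theorem stmt_6 {nu L p q : ℕ} (dims : ℕ → ℕ) (φ : ℝ → ℝ) (hφ : Continuous φ)
    (W : ∀ k : ℕ, Matrix (Fin (dims (k + 1))) (Fin (dims k)) ℝ)
    (b : ∀ k : ℕ, Fin (dims (k + 1)) → ℝ)
    (Wout : Matrix (Fin nu) (Fin (dims (L + 1))) ℝ) (bout : Fin nu → ℝ)
    (π : EuclideanSpace ℝ (Fin (dims 0)) → EuclideanSpace ℝ (Fin nu))
    (hπ : ∀ z, π z = fun i => Wout.mulVec (netState φ dims W b (L + 1) z) i + bout i)
    (f : EuclideanSpace ℝ (Fin (dims 0)) → EuclideanSpace ℝ (Fin nu) →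
      EuclideanSpace ℝ (Fin (dims 0)))
    (hf : ∀ i : Fin (dims 0), ∃ P : MvPolynomial (Fin (dims 0) ⊕ Fin nu) ℝ,
        ∀ z u, f z u i = MvPolynomial.eval (Sum.elim z u) P)
    (hequil : f 0 (π 0) = 0)
    (g : Fin p → (NetIdx dims L → ℝ) → ℝ) (hgpoly : ∀ i, IsPolyFun (g i))
    (h : Fin q → (NetIdx dims L → ℝ) → ℝ) (hhpoly : ∀ j, IsPolyFun (h j))
    (hg : ∀ i z, 0 ≤ g i (netX φ dims W b L z))
    (hh : ∀ j z, h j (netX φ dims W b L z) = 0)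
    (V : EuclideanSpace ℝ (Fin (dims 0)) → ℝ)
    (hVpoly : IsPolyFun fun z : Fin (dims 0) → ℝ => V (WithLp.toLp 2 z)) (hV0 : V 0 = 0)
    (ρ : EuclideanSpace ℝ (Fin (dims 0)) → ℝ)
    (hρpoly : IsPolyFun fun z : Fin (dims 0) → ℝ => ρ (WithLp.toLp 2 z))
    (hρ0 : ρ 0 = 0) (hρpos : ∀ z : EuclideanSpace ℝ (Fin (dims 0)), z ≠ 0 → 0 < ρ z)
    (hVρ : IsSOSFun fun z : Fin (dims 0) → ℝ => V (WithLp.toLp 2 z) - ρ (WithLp.toLp 2 z))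
    (s : Fin p → (NetIdx dims L → ℝ) → ℝ) (hs : ∀ i, IsSOSFun (s i))
    (t : Fin q → (NetIdx dims L → ℝ) → ℝ) (ht : ∀ j, IsPolyFun (t j))
    (hmain : IsSOSFun fun X : NetIdx dims L → ℝ =>
      -(inner ℝ (gradient V (WithLp.toLp 2 fun i => X (Sum.inr i)))
          (f (WithLp.toLp 2 fun i => X (Sum.inr i))
            (WithLp.toLp 2 fun i => Wout.mulVec (fun j => X (Sum.inl ⟨⟨L, Nat.lt_succ_self L⟩, j⟩)) i
              + bout i)) : ℝ)
      - ∑ j, t j X * h j X - ∑ i, s i X * g i X) :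
    ∀ ε > 0, ∃ δ > 0, ∀ z : ℝ → EuclideanSpace ℝ (Fin (dims 0)),
      (∀ τ, 0 ≤ τ → HasDerivAt z (f (z τ) (π (z τ))) τ) →
      ‖z 0‖ < δ → ∀ τ, 0 ≤ τ → ‖z τ‖ < ε := by
  -- V and ρ are differentiable / continuous
  have hVdiff : Differentiable ℝ V := by
    obtain ⟨P, hP⟩ := hVpoly
    have : V = (fun x : Fin (dims 0) → ℝ => MvPolynomial.eval x P) ∘
        ⇑(PiLp.continuousLinearEquiv 2 ℝ (fun _ : Fin (dims 0) => ℝ)) := funext fun z => hP (WithLp.ofLp z)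
    rw [this]
    exact (mvpoly_diff P).comp (PiLp.continuousLinearEquiv 2 ℝ (fun _ : Fin (dims 0) => ℝ)).differentiable
  have hρdiff : Differentiable ℝ ρ := by
    obtain ⟨P, hP⟩ := hρpoly
    have : ρ = (fun x : Fin (dims 0) → ℝ => MvPolynomial.eval x P) ∘
        ⇑(PiLp.continuousLinearEquiv 2 ℝ (fun _ : Fin (dims 0) => ℝ)) := funext fun z => hP (WithLp.ofLp z)
    rw [this]
    exact (mvpoly_diff P).comp (PiLp.continuousLinearEquiv 2 ℝ (fun _ : Fin (dims 0) => ℝ)).differentiable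
  have hVcont : Continuous V := hVdiff.continuous
  have hρcont : Continuous ρ := hρdiff.continuous
  -- V ≥ ρ everywhere
  have hVge : ∀ w : EuclideanSpace ℝ (Fin (dims 0)), ρ w ≤ V w := by
    intro w
    have := sosFun_nonneg _ hVρ w
    simp only at this
    linarith
  -- key Lyapunov decrease inequality
  have key : ∀ w : EuclideanSpace ℝ (Fin (dims 0)),
      (inner ℝ (gradient V w) (f w (π w)) : ℝ) ≤ 0 := by
    intro w
    have h0 := sosFun_nonneg _ hmain (netX φ dims W b L w)
    simp only at h0
    have hXr : (WithLp.toLp 2 fun i => netX φ dims W b L w (Sum.inr i)) = w := rfl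
    have hXl : (WithLp.toLp 2 fun i => Wout.mulVec
        (fun j => netX φ dims W b L w (Sum.inl ⟨⟨L, Nat.lt_succ_self L⟩, j⟩)) i + bout i)
        = π w := congrArg (WithLp.toLp 2) (hπ w).symm
    rw [hXr, hXl] at h0
    have hsum_h : ∑ j, t j (netX φ dims W b L w) * h j (netX φ dims W b L w) = 0 :=
      Finset.sum_eq_zero fun j _ => by rw [hh j w, mul_zero]
    have hsum_g : 0 ≤ ∑ i, s i (netX φ dims W b L w) * g i (netX φ dims W b L w) :=
      Finset.sum_nonneg fun i _ => mul_nonneg (sosFun_nonneg _ (hs i) _) (hg i w)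
    rw [hsum_h] at h0
    linarith
  intro ε hε
  rcases subsingleton_or_nontrivial (EuclideanSpace ℝ (Fin (dims 0))) with hss | hnt
  · refine ⟨ε, hε, fun z _ _ τ _ => ?_⟩
    rw [Subsingleton.elim (z τ) 0]
    simpa using hε
  -- minimum of ρ on the sphere of radius ε
  obtain ⟨w₀, hw₀s, hw₀min⟩ :=
    (isCompact_sphere (0 : EuclideanSpace ℝ (Fin (dims 0))) ε).exists_isMinOn
      (NormedSpace.sphere_nonempty.mpr hε.le) hρcont.continuousOn
  set m := ρ w₀ with hm_def
  have hw₀norm : ‖w₀‖ = ε := mem_sphere_zero_iff_norm.mp hw₀s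
  have hm : 0 < m := hρpos w₀ (by intro h0; rw [h0, norm_zero] at hw₀norm; linarith)
  -- continuity of V at 0
  obtain ⟨δ', hδ'pos, hδ'⟩ := Metric.continuousAt_iff.mp hVcont.continuousAt m hm
  refine ⟨min δ' ε, lt_min hδ'pos hε, fun z hz hz0 τ hτ => ?_⟩
  -- V is nonincreasing along the trajectory
  have hu : ∀ t : ℝ, 0 ≤ t → HasDerivAt (fun t => V (z t))
      (inner ℝ (gradient V (z t)) (f (z t) (π (z t))) : ℝ) t := by
    intro t ht
    have h1 := (hVdiff (z t)).hasGradientAt.hasFDerivAt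
    have h2 := h1.comp_hasDerivAt t (hz t ht)
    exact h2
  have hmono : AntitoneOn (fun t => V (z t)) (Set.Ici 0) := by
    apply antitoneOn_of_deriv_nonpos (convex_Ici 0)
    · exact fun t ht => (hu t ht).continuousAt.continuousWithinAt
    · intro t ht
      rw [interior_Ici] at ht
      exact ((hu t ht.le).differentiableAt).differentiableWithinAt
    · intro t ht
      rw [interior_Ici] at ht
      rw [(hu t ht.le).deriv]
      exact key (z t)
  -- V (z 0) < m
  have hVz0 : V (z 0) < m := by
    have hd : dist (z 0) 0 < δ' := by
      rw [dist_zero_right]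
      exact lt_of_lt_of_le hz0 (min_le_left _ _)
    have := hδ' hd
    rw [hV0, Real.dist_eq, sub_zero] at this
    exact lt_of_le_of_lt (le_abs_self _) this
  by_contra hcon
  push_neg at hcon
  have hcont : ContinuousOn (fun t => ‖z t‖) (Set.Icc 0 τ) :=
    fun t ht => ((hz t ht.1).continuousAt.norm).continuousWithinAt
  have hmem : ε ∈ Set.Icc ‖z 0‖ ‖z τ‖ :=
    ⟨(lt_of_lt_of_le hz0 (min_le_right _ _)).le, hcon⟩
  obtain ⟨c, hc, hcε⟩ := intermediate_value_Icc hτ hcont hmem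
  have h1 : V (z c) ≤ V (z 0) := hmono Set.self_mem_Ici (Set.mem_Ici.mpr hc.1) hc.1
  have h2 : m ≤ ρ (z c) :=
    isMinOn_iff.mp hw₀min _ (mem_sphere_zero_iff_norm.mpr hcε)
  have h3 : ρ (z c) ≤ V (z c) := hVge (z c)
  linarith
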